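/- The Shannon entropy of the Poisson distribution, H_S(λ) = -∑_{k=0}^∞ (λ^k e^{-λ}/k!) · log(λ^k e^{-λ}/k!), is a strictly increasing function of λ on (0, +∞). -/

import Mathlib

open Real

private lemma log_nat_le (k : ℕ) : Real.log k ≤ (k : ℝ) :=
  Real.log_le_self (Nat.cast_nonneg k)

private lemma log_factorial_le (k : ℕ) : Real.log (Nat.factorial k) ≤ (k : ℝ) ^ 2 := by
  calc Real.log (Nat.factorial k) ≤ Real.log ((k : ℝ) ^ k) := by
        rcases Nat.eq_zero_or_pos k with h | h
        · subst h; simp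
        apply Real.log_le_log (by exact_mod_cast Nat.factorial_pos k)
        exact_mod_cast Nat.factorial_le_pow k
    _ = (k : ℝ) * Real.log k := Real.log_pow k k
    _ ≤ (k : ℝ) * k := mul_le_mul_of_nonneg_left (log_nat_le k) (Nat.cast_nonneg k)
    _ = (k : ℝ) ^ 2 := by ring

private lemma log_factorial_nonneg (k : ℕ) : 0 ≤ Real.log (Nat.factorial k) :=
  Real.log_nonneg (by exact_mod_cast Nat.one_le_iff_ne_zero.mpr (Nat.factorial_pos k).ne')

private lemma cube_ge_one (k : ℕ) : (1:ℝ) ≤ ((k:ℝ)+1)^3 := by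
  nlinarith [Nat.cast_nonneg (α := ℝ) k, sq_nonneg ((k:ℝ)+1), sq_nonneg ((k:ℝ))]

private lemma summable_cube {x : ℝ} (hx : 0 ≤ x) :
    Summable (fun k : ℕ => ((k : ℝ) + 1) ^ 3 * x ^ k / Nat.factorial k) := by
  apply summable_of_ratio_norm_eventually_le (r := 1/2) (by norm_num)
  filter_upwards [Filter.eventually_ge_atTop (⌈16 * x⌉₊ + 1)] with k hk
  have hkx : 16 * x ≤ (k : ℝ) := by
    have : (⌈16 * x⌉₊ : ℝ) ≤ (k : ℝ) := by exact_mod_cast le_trans (Nat.le_succ _) hk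
    exact le_trans (Nat.le_ceil _) this
  have hfpos : (0 : ℝ) < (Nat.factorial k : ℝ) := by exact_mod_cast Nat.factorial_pos k
  rw [Real.norm_of_nonneg (by positivity), Real.norm_of_nonneg (by positivity)]
  have hfac : ((Nat.factorial (k+1) : ℝ)) = ((k : ℝ) + 1) * Nat.factorial k := by
    push_cast [Nat.factorial_succ]; ring
  have h8 : ((k:ℝ)+1+1) ^ 3 ≤ 8 * ((k:ℝ)+1) ^ 3 := by
    nlinarith [pow_nonneg (Nat.cast_nonneg (α := ℝ) k) 3, sq_nonneg ((k:ℝ)), Nat.cast_nonneg (α := ℝ) k]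
  have hxle : x ≤ ((k:ℝ)+1) / 16 := by linarith
  have key : ((k:ℝ)+1+1) ^ 3 * x ≤ (1/2) * ((k:ℝ)+1) ^ 4 := by
    calc ((k:ℝ)+1+1) ^ 3 * x ≤ (8 * ((k:ℝ)+1) ^ 3) * x := mul_le_mul_of_nonneg_right h8 hx
      _ ≤ (8 * ((k:ℝ)+1) ^ 3) * (((k:ℝ)+1)/16) := by
          apply mul_le_mul_of_nonneg_left hxle (by positivity)
      _ = (1/2) * ((k:ℝ)+1) ^ 4 := by ring
  have h1 : ((k:ℝ)+1+1) ^ 3 * x ^ (k+1) ≤ ((1/2) * ((k:ℝ)+1) ^ 4) * x ^ k := by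
    calc ((k:ℝ)+1+1) ^ 3 * x ^ (k+1) = (((k:ℝ)+1+1) ^ 3 * x) * x ^ k := by rw [pow_succ]; ring
      _ ≤ ((1/2) * ((k:ℝ)+1) ^ 4) * x ^ k := mul_le_mul_of_nonneg_right key (by positivity)
  rw [hfac]
  push_cast
  calc ((k:ℝ)+1+1) ^ 3 * x ^ (k+1) / (((k:ℝ)+1) * Nat.factorial k)
      ≤ ((1/2) * ((k:ℝ)+1) ^ 4 * x ^ k) / (((k:ℝ)+1) * Nat.factorial k) := by gcongr
    _ = 1/2 * (((k:ℝ)+1) ^ 3 * x ^ k / Nat.factorial k) := by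
        field_simp

private lemma summable_aux {c : ℕ → ℝ} {x C : ℝ} (hx : 0 ≤ x)
    (hc : ∀ k, |c k| ≤ C * ((k : ℝ) + 1) ^ 3) :
    Summable (fun k : ℕ => c k * x ^ k / Nat.factorial k) := by
  apply Summable.of_norm_bounded ((summable_cube hx).mul_left C)
  intro k
  have hfpos : (0 : ℝ) < (Nat.factorial k : ℝ) := by exact_mod_cast Nat.factorial_pos k
  rw [norm_div, norm_mul, Real.norm_of_nonneg (by positivity : (0:ℝ) ≤ x ^ k),
    Real.norm_of_nonneg hfpos.le]
  calc |c k| * x ^ k / Nat.factorial k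
      ≤ (C * ((k:ℝ)+1)^3) * x ^ k / Nat.factorial k := by gcongr; exact hc k
    _ = C * (((k:ℝ)+1)^3 * x ^ k / Nat.factorial k) := by ring

private lemma tsum_exp (x : ℝ) : ∑' k : ℕ, x ^ k / Nat.factorial k = Real.exp x := by
  rw [Real.exp_eq_exp_ℝ, NormedSpace.exp_eq_tsum_div]

private lemma summable_exp {x : ℝ} (hx : 0 ≤ x) :
    Summable (fun k : ℕ => x ^ k / Nat.factorial k) := by
  have := summable_aux (c := fun _ => (1:ℝ)) (C := 1) hx
    (fun k => by rw [abs_one, one_mul]; exact cube_ge_one k)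
  simpa using this

private lemma summable_k {x : ℝ} (hx : 0 ≤ x) :
    Summable (fun k : ℕ => (k:ℝ) * x ^ k / Nat.factorial k) := by
  apply summable_aux (C := 1) hx
  intro k
  rw [abs_of_nonneg (Nat.cast_nonneg k), one_mul]
  nlinarith [Nat.cast_nonneg (α := ℝ) k, sq_nonneg ((k:ℝ)+1), sq_nonneg ((k:ℝ))]

private lemma logfact_bound (k : ℕ) : |Real.log (Nat.factorial k)| ≤ 1 * ((k:ℝ)+1)^3 := by
  rw [abs_of_nonneg (log_factorial_nonneg k), one_mul]
  have := log_factorial_le k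
  nlinarith [Nat.cast_nonneg (α := ℝ) k, sq_nonneg ((k:ℝ))]

private lemma summable_logfact {x : ℝ} (hx : 0 ≤ x) :
    Summable (fun k : ℕ => Real.log (Nat.factorial k) * x ^ k / Nat.factorial k) :=
  summable_aux hx logfact_bound

private lemma fact_succ_cast (k : ℕ) :
    ((Nat.factorial (k+1) : ℝ)) = ((k : ℝ) + 1) * Nat.factorial k := by
  push_cast [Nat.factorial_succ]; ring

private lemma tsum_k_exp {x : ℝ} (hx : 0 ≤ x) :
    ∑' k : ℕ, (k:ℝ) * x ^ k / Nat.factorial k = x * Real.exp x := by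
  rw [Summable.tsum_eq_zero_add (summable_k hx)]
  have h : ∀ k : ℕ, ((k+1 : ℕ):ℝ) * x ^ (k+1) / Nat.factorial (k+1)
      = x * (x ^ k / Nat.factorial k) := by
    intro k
    have h1 : ((Nat.factorial k : ℝ)) ≠ 0 := by exact_mod_cast (Nat.factorial_pos k).ne'
    rw [fact_succ_cast, pow_succ]
    push_cast
    field_simp
  simp only [h]
  rw [tsum_mul_left, tsum_exp]
  simp

/-- The entropy rewritten in closed-ish form. -/
private noncomputable def Fent (x : ℝ) : ℝ :=
  x - x * Real.log x + Real.exp (-x) *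
    ∑' k : ℕ, Real.log (Nat.factorial k) * x ^ k / Nat.factorial k

private lemma f_eq_Fent {l : ℝ} (hl : 0 < l) :
    -∑' k : ℕ, (l ^ k * Real.exp (-l) / (Nat.factorial k : ℝ)) *
        Real.log (l ^ k * Real.exp (-l) / (Nat.factorial k : ℝ)) = Fent l := by
  have hfk : ∀ k : ℕ, (0:ℝ) < (Nat.factorial k : ℝ) := fun k => by
    exact_mod_cast Nat.factorial_pos k
  have hterm : ∀ k : ℕ, (l ^ k * Real.exp (-l) / (Nat.factorial k : ℝ)) *
        Real.log (l ^ k * Real.exp (-l) / (Nat.factorial k : ℝ)) =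
      Real.exp (-l) * (Real.log l * ((k:ℝ) * l ^ k / Nat.factorial k)
        - l * (l ^ k / Nat.factorial k)
        - Real.log (Nat.factorial k) * l ^ k / Nat.factorial k) := by
    intro k
    have h1 : Real.log (l ^ k * Real.exp (-l) / (Nat.factorial k : ℝ))
        = (k:ℝ) * Real.log l + (-l) - Real.log (Nat.factorial k) := by
      rw [Real.log_div (by positivity) (hfk k).ne', Real.log_mul (by positivity)
        (Real.exp_pos _).ne', Real.log_pow, Real.log_exp]
    rw [h1]
    have h2 : ((Nat.factorial k : ℝ)) ≠ 0 := (hfk k).ne'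
    field_simp
    ring
  rw [tsum_congr hterm, tsum_mul_left]
  have S1 : Summable (fun k : ℕ => Real.log l * ((k:ℝ) * l ^ k / Nat.factorial k)) :=
    (summable_k hl.le).mul_left _
  have S2 : Summable (fun k : ℕ => l * (l ^ k / Nat.factorial k)) :=
    (summable_exp hl.le).mul_left _
  have S3 := summable_logfact hl.le
  rw [Summable.tsum_sub (S1.sub S2) S3, Summable.tsum_sub S1 S2, tsum_mul_left, tsum_mul_left,
    tsum_k_exp hl.le, tsum_exp]
  have key : Real.exp (-l) * Real.exp l = 1 := by
    rw [← Real.exp_add]; simp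
  unfold Fent
  linear_combination (l - l * Real.log l) * key

private lemma summable_deriv_terms {x : ℝ} (hx : 0 ≤ x) :
    Summable (fun k : ℕ => Real.log (Nat.factorial k) * ((k:ℝ) * x ^ (k-1)) / Nat.factorial k) := by
  apply Summable.of_nonneg_of_le (fun k => by positivity) ?_
    (summable_cube (x := x + 1) (by linarith))
  intro k
  have hfpos := (Nat.cast_pos (α := ℝ)).mpr (Nat.factorial_pos k)
  have hnum : Real.log (Nat.factorial k) * ((k:ℝ) * x ^ (k-1)) ≤ ((k:ℝ)+1)^3 * (x+1) ^ k := by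
    have hxp : x ^ (k-1) ≤ (x+1) ^ k :=
      le_trans (pow_le_pow_left₀ hx (by linarith) _)
        (pow_le_pow_right₀ (by linarith) (Nat.sub_le k 1))
    calc Real.log (Nat.factorial k) * ((k:ℝ) * x ^ (k-1))
        ≤ (k:ℝ)^2 * ((k:ℝ) * x ^ (k-1)) := by
          apply mul_le_mul_of_nonneg_right (log_factorial_le k) (by positivity)
      _ ≤ (k:ℝ)^2 * ((k:ℝ) * (x+1) ^ k) := by
          apply mul_le_mul_of_nonneg_left ?_ (by positivity)
          exact mul_le_mul_of_nonneg_left hxp (Nat.cast_nonneg k)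
      _ = ((k:ℝ)^2 * (k:ℝ)) * (x+1) ^ k := by ring
      _ ≤ ((k:ℝ)+1)^3 * (x+1) ^ k := by
          apply mul_le_mul_of_nonneg_right ?_ (by positivity)
          nlinarith [Nat.cast_nonneg (α := ℝ) k, sq_nonneg ((k:ℝ))]
  exact div_le_div_of_nonneg_right hnum hfpos.le

private lemma tangent_le {l : ℝ} (hl : 0 < l) (x : ℝ) (hx : 0 ≤ x) :
    (Real.log l + 1) * x - l ≤ x * Real.log x := by
  rcases eq_or_lt_of_le hx with h | h
  · simp [← h]; linarith
  · have := Real.log_le_sub_one_of_pos (x := l / x) (by positivity)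
    rw [Real.log_div hl.ne' h.ne'] at this
    have h2 : x * (Real.log l - Real.log x) ≤ x * (l / x - 1) :=
      mul_le_mul_of_nonneg_left this h.le
    have h3 : x * (l / x - 1) = l - x := by field_simp
    rw [h3] at h2
    nlinarith [h2]

private lemma hasDerivAt_G {l : ℝ} (hl : 0 < l) :
    HasDerivAt (fun y : ℝ => ∑' k : ℕ, Real.log (Nat.factorial k) * y ^ k / Nat.factorial k)
      (∑' k : ℕ, Real.log (Nat.factorial k) * ((k:ℝ) * l ^ (k-1)) / Nat.factorial k) l := by
  set R := l + 1 with hRdef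
  have hR0 : (0:ℝ) ≤ R := by simp only [hRdef]; linarith
  apply hasDerivAt_tsum_of_isPreconnected
    (u := fun k : ℕ => Real.log (Nat.factorial k) * ((k:ℝ) * R ^ (k-1)) / Nat.factorial k)
    (g := fun (k : ℕ) (y : ℝ) => Real.log (Nat.factorial k) * y ^ k / Nat.factorial k)
    (g' := fun (k : ℕ) (y : ℝ) => Real.log (Nat.factorial k) * ((k:ℝ) * y ^ (k-1)) / Nat.factorial k)
    (y₀ := l) (summable_deriv_terms hR0) (isOpen_Ioo (a := -R) (b := R))
    ((convex_Ioo _ _).isPreconnected) ?_ ?_ ?_ ?_ ?_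
  · intro k y _
    exact ((hasDerivAt_pow k y).const_mul (Real.log (Nat.factorial k))).div_const _
  · intro k y hy
    have hyR : |y| ≤ R := by
      rw [abs_le]; exact ⟨le_of_lt hy.1, le_of_lt hy.2⟩
    have hfpos := (Nat.cast_pos (α := ℝ)).mpr (Nat.factorial_pos k)
    rw [norm_div, norm_mul, Real.norm_of_nonneg (log_factorial_nonneg k),
      Real.norm_of_nonneg hfpos.le, norm_mul, Real.norm_of_nonneg (Nat.cast_nonneg (α := ℝ) k),
      norm_pow]
    apply div_le_div_of_nonneg_right ?_ hfpos.le
    apply mul_le_mul_of_nonneg_left ?_ (log_factorial_nonneg k)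
    apply mul_le_mul_of_nonneg_left ?_ (Nat.cast_nonneg k)
    exact pow_le_pow_left₀ (abs_nonneg y) hyR _
  · constructor
    · simp only [hRdef]; linarith
    · simp only [hRdef]; linarith
  · exact summable_logfact hl.le
  · constructor
    · simp only [hRdef]; linarith
    · simp only [hRdef]; linarith

private lemma summable_logfact_succ {x : ℝ} (hx : 0 ≤ x) :
    Summable (fun k : ℕ => Real.log (Nat.factorial (k+1)) * x ^ k / Nat.factorial k) := by
  apply summable_aux (C := 1) hx
  intro k
  rw [abs_of_nonneg (log_factorial_nonneg (k+1)), one_mul]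
  have h := log_factorial_le (k+1)
  push_cast at h
  nlinarith [Nat.cast_nonneg (α := ℝ) k, sq_nonneg ((k:ℝ)+1)]

private lemma deriv_sum_eq {l : ℝ} (hl : 0 < l) :
    ∑' k : ℕ, Real.log (Nat.factorial k) * ((k:ℝ) * l ^ (k-1)) / Nat.factorial k
      = ∑' k : ℕ, Real.log (Nat.factorial (k+1)) * l ^ k / Nat.factorial k := by
  rw [Summable.tsum_eq_zero_add (summable_deriv_terms hl.le)]
  have h : ∀ k : ℕ, Real.log (Nat.factorial (k+1)) * (((k+1:ℕ):ℝ) * l ^ ((k+1)-1)) / Nat.factorial (k+1)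
      = Real.log (Nat.factorial (k+1)) * l ^ k / Nat.factorial k := by
    intro k
    have h1 : ((Nat.factorial k : ℝ)) ≠ 0 := by exact_mod_cast (Nat.factorial_pos k).ne'
    rw [Nat.add_sub_cancel, fact_succ_cast]
    push_cast
    field_simp
  simp only [h]
  simp [Nat.factorial]

private lemma summable_E {x : ℝ} (hx : 0 ≤ x) :
    Summable (fun k : ℕ => Real.log ((k:ℝ)+1) * x ^ k / Nat.factorial k) := by
  apply summable_aux (C := 1) hx
  intro k
  have h0 : 0 ≤ Real.log ((k:ℝ)+1) := Real.log_nonneg (by linarith [Nat.cast_nonneg (α := ℝ) k])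
  rw [abs_of_nonneg h0, one_mul]
  have h1 : Real.log ((k:ℝ)+1) ≤ (k:ℝ)+1 := Real.log_le_self (by positivity)
  nlinarith [Nat.cast_nonneg (α := ℝ) k, sq_nonneg ((k:ℝ)+1)]

private lemma diff_eq {l : ℝ} (hl : 0 < l) :
    (∑' k : ℕ, Real.log (Nat.factorial (k+1)) * l ^ k / Nat.factorial k)
      - (∑' k : ℕ, Real.log (Nat.factorial k) * l ^ k / Nat.factorial k)
      = ∑' k : ℕ, Real.log ((k:ℝ)+1) * l ^ k / Nat.factorial k := by
  rw [← Summable.tsum_sub (summable_logfact_succ hl.le) (summable_logfact hl.le)]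
  apply tsum_congr
  intro k
  have h1 : (0:ℝ) < (Nat.factorial k : ℝ) := by exact_mod_cast Nat.factorial_pos k
  have h2 : Real.log (Nat.factorial (k+1)) = Real.log ((k:ℝ)+1) + Real.log (Nat.factorial k) := by
    rw [fact_succ_cast, Real.log_mul (by positivity) h1.ne']
  rw [h2]
  ring

private lemma summable_mlogm {x : ℝ} (hx : 0 ≤ x) :
    Summable (fun m : ℕ => ((m:ℝ) * Real.log m) * x ^ m / Nat.factorial m) := by
  apply summable_aux (C := 1) hx
  intro m
  have h0 : 0 ≤ Real.log (m:ℝ) := by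
    rcases Nat.eq_zero_or_pos m with h | h
    · subst h; simp
    · exact Real.log_nonneg (by exact_mod_cast h)
  rw [abs_of_nonneg (mul_nonneg (Nat.cast_nonneg m) h0), one_mul]
  have h1 := log_nat_le m
  nlinarith [Nat.cast_nonneg (α := ℝ) m, sq_nonneg ((m:ℝ)), sq_nonneg ((m:ℝ)+1)]

private lemma key_pos {l : ℝ} (hl : 0 < l) :
    Real.log l < Real.exp (-l) * ∑' k : ℕ, Real.log ((k:ℝ)+1) * l ^ k / Nat.factorial k := by
  set E := ∑' k : ℕ, Real.log ((k:ℝ)+1) * l ^ k / Nat.factorial k with hE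
  -- step 1 : ∑ m log m l^m/m! = l * E
  have step1 : ∑' m : ℕ, ((m:ℝ) * Real.log m) * l ^ m / Nat.factorial m = l * E := by
    rw [Summable.tsum_eq_zero_add (summable_mlogm hl.le)]
    have h : ∀ m : ℕ, (((m+1:ℕ):ℝ) * Real.log ((m+1:ℕ):ℝ)) * l ^ (m+1) / Nat.factorial (m+1)
        = l * (Real.log ((m:ℝ)+1) * l ^ m / Nat.factorial m) := by
      intro m
      have h1 : ((Nat.factorial m : ℝ)) ≠ 0 := by exact_mod_cast (Nat.factorial_pos m).ne'
      rw [fact_succ_cast, pow_succ]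
      push_cast
      field_simp
    simp only [h]
    rw [tsum_mul_left]
    simp
    exact Or.inl hE.symm
  -- step 2 : tangent sum value
  have hsplit : ∀ m : ℕ, ((Real.log l + 1) * (m:ℝ) - l) * l ^ m / Nat.factorial m
      = (Real.log l + 1) * ((m:ℝ) * l ^ m / Nat.factorial m) - l * (l ^ m / Nat.factorial m) := by
    intro m; ring
  have Sf : Summable (fun m : ℕ => ((Real.log l + 1) * (m:ℝ) - l) * l ^ m / Nat.factorial m) := by
    apply summable_aux (C := |Real.log l + 1| + l) hl.le
    intro m
    have h1 : |(Real.log l + 1) * (m:ℝ) - l| ≤ |Real.log l + 1| * m + l := by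
      calc |(Real.log l + 1) * (m:ℝ) - l| ≤ |(Real.log l + 1) * (m:ℝ)| + |l| := abs_sub _ _
        _ = |Real.log l + 1| * m + l := by
            rw [abs_mul, abs_of_nonneg (Nat.cast_nonneg (α := ℝ) m), abs_of_pos hl]
    have hm3 : (m:ℝ) ≤ ((m:ℝ)+1)^3 := by
      nlinarith [Nat.cast_nonneg (α := ℝ) m, sq_nonneg ((m:ℝ)+1), sq_nonneg ((m:ℝ))]
    have h13 : (1:ℝ) ≤ ((m:ℝ)+1)^3 := cube_ge_one m
    nlinarith [abs_nonneg (Real.log l + 1), h1, hm3, h13, hl.le,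
      mul_le_mul_of_nonneg_left hm3 (abs_nonneg (Real.log l + 1))]
  have step2 : ∑' m : ℕ, ((Real.log l + 1) * (m:ℝ) - l) * l ^ m / Nat.factorial m
      = (Real.log l + 1) * (l * Real.exp l) - l * Real.exp l := by
    rw [tsum_congr hsplit,
      Summable.tsum_sub ((summable_k hl.le).mul_left _) ((summable_exp hl.le).mul_left _),
      tsum_mul_left, tsum_mul_left, tsum_k_exp hl.le, tsum_exp]
  -- step 3 : strict inequality
  have step3 : ∑' m : ℕ, ((Real.log l + 1) * (m:ℝ) - l) * l ^ m / Nat.factorial m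
      < ∑' m : ℕ, ((m:ℝ) * Real.log m) * l ^ m / Nat.factorial m := by
    apply Summable.tsum_lt_tsum (i := 0) ?_ ?_ Sf (summable_mlogm hl.le)
    · intro m
      apply div_le_div_of_nonneg_right ?_ (by exact_mod_cast (Nat.factorial_pos m) : (0:ℝ) < (Nat.factorial m : ℝ)).le
      exact mul_le_mul_of_nonneg_right (tangent_le hl (m:ℝ) (Nat.cast_nonneg m)) (by positivity)
    · norm_num [Nat.factorial]
      exact hl
  rw [step1, step2] at step3
  have h4 : l * (Real.exp l * Real.log l) < l * E := by nlinarith [step3]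
  have h5 : Real.exp l * Real.log l < E := lt_of_mul_lt_mul_left h4 hl.le
  have h6 := mul_lt_mul_of_pos_left h5 (Real.exp_pos (-l))
  have key : Real.exp (-l) * Real.exp l = 1 := by rw [← Real.exp_add]; simp
  have h7 : Real.exp (-l) * (Real.exp l * Real.log l) = Real.log l := by
    rw [← mul_assoc, key, one_mul]
  linarith [h6, h7]

private lemma hasDerivAt_Fent {l : ℝ} (hl : 0 < l) :
    HasDerivAt Fent
      (-Real.log l + Real.exp (-l) * ∑' k : ℕ, Real.log ((k:ℝ)+1) * l ^ k / Nat.factorial k) l := by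
  have h1 : HasDerivAt (fun y : ℝ => y - y * Real.log y) (1 - (Real.log l + 1)) l :=
    (hasDerivAt_id l).sub (Real.hasDerivAt_mul_log hl.ne')
  have h2 : HasDerivAt (fun y : ℝ => Real.exp (-y)) (-Real.exp (-l)) l := by
    exact ((Real.hasDerivAt_exp (-l)).comp l ((hasDerivAt_id l).neg)).congr_deriv (by simp)
  have h4 := h2.mul (hasDerivAt_G hl)
  have h5 := h1.add h4
  have heq : (1 - (Real.log l + 1)) +
      (-Real.exp (-l) * (∑' k : ℕ, Real.log (Nat.factorial k) * l ^ k / Nat.factorial k)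
        + Real.exp (-l) * ∑' k : ℕ, Real.log (Nat.factorial k) * ((k:ℝ) * l ^ (k-1)) / Nat.factorial k)
      = -Real.log l + Real.exp (-l) * ∑' k : ℕ, Real.log ((k:ℝ)+1) * l ^ k / Nat.factorial k := by
    rw [deriv_sum_eq hl]
    have hd := diff_eq hl
    linear_combination Real.exp (-l) * hd
  rw [heq] at h5
  exact h5

/-- The Shannon entropy of the Poisson distribution,
`H_S(λ) = -∑_{k=0}^∞ (λ^k e^{-λ}/k!) · log(λ^k e^{-λ}/k!)`,
is strictly increasing in the intensity `λ` on `(0, ∞)`. -/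
theorem shannon_entropy_poisson_strictMonoOn :
    StrictMonoOn (fun l : ℝ =>
      -∑' k : ℕ, (l ^ k * Real.exp (-l) / (Nat.factorial k : ℝ)) *
        Real.log (l ^ k * Real.exp (-l) / (Nat.factorial k : ℝ)))
      (Set.Ioi (0 : ℝ)) := by
  have hmono : StrictMonoOn Fent (Set.Ioi (0 : ℝ)) := by
    apply strictMonoOn_of_deriv_pos (convex_Ioi 0)
    · intro x hx
      exact (hasDerivAt_Fent hx).differentiableAt.continuousAt.continuousWithinAt
    · intro x hx
      rw [interior_Ioi] at hx
      rw [(hasDerivAt_Fent hx).deriv]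
      linarith [key_pos hx]
  intro a ha b hb hab
  have h := hmono ha hb hab
  simp only []
  rw [f_eq_Fent (Set.mem_Ioi.mp ha), f_eq_Fent (Set.mem_Ioi.mp hb)]
  exact h
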